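/- The correcting factor function t ↦ c(t) defined above satisfies: c(t) < 1 if and only if the line q_t intersects the interior of P, c(t) = 1 if and only if q_t is a supporting line of P, and c(t) > 1 if and only if q_t ∩ P = ∅. -/

import Mathlib

def homothetyImage (S : EuclideanSpace ℝ (Fin 2)) (c : ℝ)
    (P : Set (EuclideanSpace ℝ (Fin 2))) : Set (EuclideanSpace ℝ (Fin 2)) :=
  (fun X => S + c • (X - S)) '' P

def IsSupportLine (L K : Set (EuclideanSpace ℝ (Fin 2))) : Prop :=
  (L ∩ K).Nonempty ∧
  ∃ (f : EuclideanSpace ℝ (Fin 2) →L[ℝ] ℝ) (a : ℝ), f ≠ 0 ∧ L = {x | f x = a} ∧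
    ((∀ x ∈ K, f x ≤ a) ∨ (∀ x ∈ K, a ≤ f x))

open RealInnerProductSpace

local notation "E2" => EuclideanSpace ℝ (Fin 2)

lemma orth_span {v n : E2} (hv : v ≠ 0) (hn : ‖n‖ = 1)
    (horth : ⟪v, n⟫ = 0) {w : E2} (hw : ⟪w, n⟫ = 0) : ∃ s : ℝ, w = s • v := by
  have hn0 : n ≠ 0 := by intro h; simp [h] at hn
  have h2 : Module.finrank ℝ ((ℝ ∙ n)ᗮ : Submodule ℝ E2) = 1 := by
    have h1 : Module.finrank ℝ (ℝ ∙ n) = 1 := finrank_span_singleton hn0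
    have := Submodule.finrank_add_finrank_orthogonal (𝕜 := ℝ) (ℝ ∙ n)
    have hE : Module.finrank ℝ E2 = 2 := finrank_euclideanSpace_fin
    omega
  have hvmem : v ∈ (ℝ ∙ n)ᗮ := by
    intro u hu
    obtain ⟨a, rfl⟩ := Submodule.mem_span_singleton.mp hu
    rw [real_inner_smul_left, real_inner_comm, horth, mul_zero]
  have hle : (ℝ ∙ v) ≤ (ℝ ∙ n)ᗮ := Submodule.span_le.mpr (by simpa using hvmem)
  have heq : (ℝ ∙ v) = (ℝ ∙ n)ᗮ :=
    Submodule.eq_of_le_of_finrank_eq hle (by rw [finrank_span_singleton hv, h2])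
  have hwmem : w ∈ (ℝ ∙ n)ᗮ := by
    intro u hu
    obtain ⟨a, rfl⟩ := Submodule.mem_span_singleton.mp hu
    rw [real_inner_smul_left, real_inner_comm, hw, mul_zero]
  rw [← heq] at hwmem
  obtain ⟨s, hs⟩ := Submodule.mem_span_singleton.mp hwmem
  exact ⟨s, hs.symm⟩

/-- The line q t is exactly the level set of x ↦ ⟪x - S, n⟫. -/
lemma line_eq {S v n : E2} (hv : v ≠ 0) (hn : ‖n‖ = 1) (horth : ⟪v, n⟫ = 0) (t : ℝ) :
    {x : E2 | ∃ s : ℝ, x = S + t • n + s • v} = {x : E2 | ⟪x - S, n⟫ = t} := by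
  have hnn : ⟪n, n⟫ = (1:ℝ) := by
    rw [real_inner_self_eq_norm_sq, hn]; norm_num
  ext x
  constructor
  · rintro ⟨s, rfl⟩
    simp only [Set.mem_setOf_eq]
    have he : S + t • n + s • v - S = t • n + s • v := by abel
    rw [he, inner_add_left, real_inner_smul_left, real_inner_smul_left, hnn, horth]
    ring
  · intro hx
    have hw : ⟪x - S - t • n, n⟫ = 0 := by
      rw [inner_sub_left, real_inner_smul_left, hnn, hx]; ring
    obtain ⟨s, hs⟩ := orth_span hv hn horth hw
    exact ⟨s, by rw [← hs]; abel⟩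

/-- Characterization of support lines of level-set form. -/
lemma support_iff {S v n : E2} (hv : v ≠ 0) (hn : ‖n‖ = 1) (horth : ⟪v, n⟫ = 0)
    (t : ℝ) (K : Set E2) :
    IsSupportLine {x : E2 | ⟪x - S, n⟫ = t} K ↔
      (∃ x ∈ K, ⟪x - S, n⟫ = t) ∧
      ((∀ x ∈ K, ⟪x - S, n⟫ ≤ t) ∨ (∀ x ∈ K, t ≤ ⟪x - S, n⟫)) := by
  have hnn : ⟪n, n⟫ = (1:ℝ) := by
    rw [real_inner_self_eq_norm_sq, hn]; norm_num
  constructor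
  · rintro ⟨⟨x0, hx0L, hx0K⟩, f, a, hf0, hL, hside⟩
    refine ⟨⟨x0, hx0K, hx0L⟩, ?_⟩
    -- the point S + t • n lies on the line
    have hpt : (S + t • n) ∈ {x : E2 | ⟪x - S, n⟫ = t} := by
      simp only [Set.mem_setOf_eq, add_sub_cancel_left, real_inner_smul_left, hnn, mul_one]
    -- f vanishes on vectors orthogonal to n
    have hker : ∀ w : E2, ⟪w, n⟫ = 0 → f w = 0 := by
      intro w hw
      have h1 : (S + t • n) ∈ {x : E2 | f x = a} := hL ▸ hpt
      have h2 : (S + t • n + w) ∈ {x : E2 | f x = a} := by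
        rw [← hL]
        have he : S + t • n + w - S = t • n + w := by abel
        simp only [Set.mem_setOf_eq, he, inner_add_left, real_inner_smul_left, hnn, hw]
        ring
      have := h2
      simp only [Set.mem_setOf_eq, map_add] at h1 h2
      rw [h1] at h2
      linarith
    have hfx : ∀ x : E2, f x = ⟪x, n⟫ * f n := by
      intro x
      have hw : ⟪x - ⟪x, n⟫ • n, n⟫ = 0 := by
        rw [inner_sub_left, real_inner_smul_left, hnn]; ring
      have := hker _ hw
      rw [map_sub, map_smul] at this
      simp only [smul_eq_mul] at this
      linarith
    have hfn : f n ≠ 0 := by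
      intro h
      apply hf0
      ext x
      rw [hfx x, h, mul_zero]; rfl
    have ha : a = (⟪S, n⟫ + t) * f n := by
      have h1 : (S + t • n) ∈ {x : E2 | f x = a} := hL ▸ hpt
      simp only [Set.mem_setOf_eq] at h1
      rw [hfx] at h1
      rw [← h1, inner_add_left, real_inner_smul_left, hnn, mul_one]
    have key : ∀ x : E2, f x ≤ a ↔ (⟪x - S, n⟫ - t) * f n ≤ 0 := by
      intro x
      rw [hfx, ha, inner_sub_left]
      constructor <;> intro h <;> nlinarith
    have key2 : ∀ x : E2, a ≤ f x ↔ 0 ≤ (⟪x - S, n⟫ - t) * f n := by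
      intro x
      rw [hfx, ha, inner_sub_left]
      constructor <;> intro h <;> nlinarith
    rcases lt_or_gt_of_ne hfn with hneg | hpos
    · rcases hside with h | h
      · right; intro x hx
        have := (key x).mp (h x hx)
        nlinarith
      · left; intro x hx
        have := (key2 x).mp (h x hx)
        nlinarith
    · rcases hside with h | h
      · left; intro x hx
        have := (key x).mp (h x hx)
        nlinarith
      · right; intro x hx
        have := (key2 x).mp (h x hx)
        nlinarith
  · rintro ⟨⟨x0, hx0K, hx0⟩, hside⟩
    refine ⟨⟨x0, hx0, hx0K⟩, innerSL ℝ n, ⟪S, n⟫ + t, ?_, ?_, ?_⟩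
    · intro h
      have : (innerSL ℝ n) n = 0 := by rw [h]; rfl
      rw [innerSL_apply_apply, hnn] at this
      norm_num at this
    · ext x
      simp only [Set.mem_setOf_eq, innerSL_apply_apply, real_inner_comm n x]
      constructor
      · intro h; rw [inner_sub_left] at h; linarith [real_inner_comm n x]
      · intro h; rw [inner_sub_left]; linarith [real_inner_comm n x]
    · rcases hside with h | h
      · left; intro x hx
        have := h x hx; rw [inner_sub_left] at this
        simp only [innerSL_apply_apply]; linarith [real_inner_comm n x]
      · right; intro x hx
        have := h x hx; rw [inner_sub_left] at this
        simp only [innerSL_apply_apply]; linarith [real_inner_comm n x]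

theorem correcting_factor_trichotomy
    (P : Set (EuclideanSpace ℝ (Fin 2))) (S : EuclideanSpace ℝ (Fin 2))
    (hcpt : IsCompact P) (hconv : Convex ℝ P) (hS : S ∈ interior P)
    (v n : EuclideanSpace ℝ (Fin 2)) (hv : v ≠ 0) (hn : ‖n‖ = 1)
    (horth : (inner ℝ v n : ℝ) = 0)
    (q : ℝ → Set (EuclideanSpace ℝ (Fin 2)))
    (hq : ∀ t : ℝ, q t = {x | ∃ s : ℝ, x = S + t • n + s • v})
    (c : ℝ → ℝ)
    (hc : ∀ t : ℝ, 0 ≤ c t ∧ IsSupportLine (q t) (homothetyImage S (c t) P)) :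
    ∀ t : ℝ,
      (c t < 1 ↔ (q t ∩ interior P).Nonempty) ∧
      (c t = 1 ↔ IsSupportLine (q t) P) ∧
      (1 < c t ↔ q t ∩ P = ∅) := by
  have hnn : ⟪n, n⟫ = (1:ℝ) := by
    rw [real_inner_self_eq_norm_sq, hn]; norm_num
  have hP : P.Nonempty := ⟨S, interior_subset hS⟩
  set ψ : EuclideanSpace ℝ (Fin 2) → ℝ := fun x => ⟪x - S, n⟫ with hψdef
  have hψc : Continuous ψ := (continuous_id.sub continuous_const).inner continuous_const
  obtain ⟨xM, hxM, hMmax⟩ := hcpt.exists_isMaxOn hP hψc.continuousOn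
  obtain ⟨xm, hxm, hmmin⟩ := hcpt.exists_isMinOn hP hψc.continuousOn
  set M := ψ xM with hMdef
  set m := ψ xm with hmdef
  have hub : ∀ x ∈ P, ψ x ≤ M := fun x hx => hMmax hx
  have hlb : ∀ x ∈ P, m ≤ ψ x := fun x hx => hmmin hx
  have hψS : ψ S = 0 := by simp [hψdef]
  -- interior points have ψ strictly between m and M
  have hint : ∀ x ∈ interior P, m < ψ x ∧ ψ x < M := by
    intro x hx
    obtain ⟨δ, hδ, hb⟩ := Metric.isOpen_iff.mp isOpen_interior x hx
    have hmemb : ∀ w : EuclideanSpace ℝ (Fin 2), ‖w‖ < δ → x + w ∈ P := by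
      intro w hw
      exact interior_subset (hb (by
        rw [Metric.mem_ball, dist_eq_norm, add_sub_cancel_left]; exact hw))
    have hnrm : ‖(δ/2) • n‖ < δ := by
      rw [norm_smul, hn, mul_one, Real.norm_eq_abs, abs_of_pos (by linarith)]; linarith
    have hnrm' : ‖-((δ/2) • n)‖ < δ := by rwa [norm_neg]
    have h1 : x + (δ/2) • n ∈ P := hmemb _ hnrm
    have h2 : x + -((δ/2) • n) ∈ P := hmemb _ hnrm'
    have e1 : ψ (x + (δ/2) • n) = ψ x + δ/2 := by
      have he : x + (δ/2) • n - S = (x - S) + (δ/2) • n := by abel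
      simp only [hψdef]
      rw [he, inner_add_left, real_inner_smul_left, hnn, mul_one]
    have e2 : ψ (x + -((δ/2) • n)) = ψ x - δ/2 := by
      have he : x + -((δ/2) • n) - S = (x - S) - (δ/2) • n := by abel
      simp only [hψdef]
      rw [he, inner_sub_left, real_inner_smul_left, hnn, mul_one]
    constructor
    · have := hlb _ h2; rw [e2] at this; linarith
    · have := hub _ h1; rw [e1] at this; linarith
  have hM0 : 0 < M := by have := (hint S hS).2; rwa [hψS] at this
  have hm0 : m < 0 := by have := (hint S hS).1; rwa [hψS] at this
  -- intermediate value on P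
  have hmid : ∀ s : ℝ, m ≤ s → s ≤ M → ∃ x ∈ P, ψ x = s := by
    intro s h1 h2
    set f : ℝ → ℝ := fun θ => ψ ((1-θ) • xm + θ • xM) with hfdef
    have hfc : Continuous f := by
      apply hψc.comp
      exact ((continuous_const.sub continuous_id).smul continuous_const).add
        (continuous_id.smul continuous_const)
    have hf0 : f 0 = m := by simp [hfdef]; rfl
    have hf1 : f 1 = M := by simp [hfdef]; rfl
    have := intermediate_value_Icc (zero_le_one (α := ℝ)) hfc.continuousOn
    rw [hf0, hf1] at this
    obtain ⟨θ, hθ, hθs⟩ := this ⟨h1, h2⟩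
    refine ⟨(1-θ) • xm + θ • xM, ?_, hθs⟩
    exact hconv hxm hxM (by linarith [hθ.2]) hθ.1 (by ring)
  -- ψ of interior combos
  have hcombo : ∀ (θ : ℝ) (x : EuclideanSpace ℝ (Fin 2)),
      ψ ((1-θ) • S + θ • x) = θ * ψ x := by
    intro θ x
    have he : (1-θ) • S + θ • x - S = θ • (x - S) := by
      rw [sub_smul, one_smul, smul_sub]; abel
    simp only [hψdef, he, real_inner_smul_left]
  -- strict intermediate value in the interior
  have hmidint : ∀ s : ℝ, m < s → s < M → ∃ x ∈ interior P, ψ x = s := by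
    intro s h1 h2
    rcases le_or_gt 0 s with hs | hs
    · have hθ1 : s / M < 1 := (div_lt_one hM0).mpr h2
      refine ⟨(1 - s/M) • S + (s/M) • xM, ?_, ?_⟩
      · exact hconv.combo_interior_self_mem_interior hS hxM (by linarith)
          (div_nonneg hs hM0.le) (by ring)
      · rw [hcombo]; field_simp; rfl
    · have hθ0 : 0 ≤ s / m := by
        rw [div_nonneg_iff]; right; exact ⟨hs.le, hm0.le⟩
      have hsm : (s/m) * m = s := div_mul_cancel₀ s (ne_of_lt hm0)
      have hθ1 : s / m < 1 := by nlinarith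
      refine ⟨(1 - s/m) • S + (s/m) • xm, ?_, ?_⟩
      · exact hconv.combo_interior_self_mem_interior hS hxm (by linarith) hθ0 (by ring)
      · rw [hcombo, ← hmdef, hsm]
  intro t
  have hqt : q t = {x | ψ x = t} := by rw [hq t, line_eq hv hn horth]
  obtain ⟨hc0, hcs⟩ := hc t
  rw [hq t, line_eq hv hn horth] at hcs
  rw [support_iff hv hn horth] at hcs
  obtain ⟨⟨x0, hx0K, hx0⟩, hside⟩ := hcs
  -- values of ψ on the homothety image
  have himval : ∀ y ∈ homothetyImage S (c t) P, ∃ p ∈ P, ψ y = c t * ψ p := by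
    rintro y ⟨p, hp, rfl⟩
    refine ⟨p, hp, ?_⟩
    simp only [hψdef, add_sub_cancel_left, real_inner_smul_left]
  have himmem : ∀ p ∈ P, S + c t • (p - S) ∈ homothetyImage S (c t) P :=
    fun p hp => ⟨p, hp, rfl⟩
  have himψ : ∀ p : EuclideanSpace ℝ (Fin 2), ψ (S + c t • (p - S)) = c t * ψ p := by
    intro p
    simp only [hψdef, add_sub_cancel_left, real_inner_smul_left]
  have hx0' : ψ x0 = t := hx0
  have hkey : c t * M = t ∨ c t * m = t := by
    obtain ⟨p0, hp0, hp0v⟩ := himval x0 hx0K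
    rcases hside with h | h
    · left
      have h1 : c t * M ≤ t := by
        have h' : (⟪S + c t • (xM - S) - S, n⟫ : ℝ) ≤ t := h _ (himmem xM hxM)
        have h'' : ψ (S + c t • (xM - S)) = c t * M := himψ xM
        have h''' : ψ (S + c t • (xM - S)) = ⟪S + c t • (xM - S) - S, n⟫ := rfl
        linarith [h''' ▸ h'']
      have h2 : t ≤ c t * M := by
        have h3 := mul_le_mul_of_nonneg_left (hub p0 hp0) hc0
        linarith
      linarith
    · right
      have h1 : t ≤ c t * m := by
        have h' : t ≤ (⟪S + c t • (xm - S) - S, n⟫ : ℝ) := h _ (himmem xm hxm)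
        have h'' : ψ (S + c t • (xm - S)) = c t * m := himψ xm
        have h''' : ψ (S + c t • (xm - S)) = ⟪S + c t • (xm - S) - S, n⟫ := rfl
        linarith [h''' ▸ h'']
      have h2 : c t * m ≤ t := by
        have h3 := mul_le_mul_of_nonneg_left (hlb p0 hp0) hc0
        linarith
      linarith
  -- the three geometric characterizations
  have hI1 : (q t ∩ interior P).Nonempty ↔ (m < t ∧ t < M) := by
    constructor
    · rintro ⟨x, hxq, hxi⟩
      rw [hqt] at hxq
      have hxq' : ψ x = t := hxq
      have := hint x hxi
      exact ⟨hxq' ▸ this.1, hxq' ▸ this.2⟩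
    · rintro ⟨h1, h2⟩
      obtain ⟨x, hx, hxe⟩ := hmidint t h1 h2
      exact ⟨x, by rw [hqt]; exact hxe, hx⟩
  have hI3 : q t ∩ P = ∅ ↔ (t < m ∨ M < t) := by
    constructor
    · intro h
      by_contra hcon
      push_neg at hcon
      obtain ⟨x, hx, hxe⟩ := hmid t hcon.1 hcon.2
      exact absurd h (Set.nonempty_iff_ne_empty.mp ⟨x, by rw [hqt]; exact hxe, hx⟩)
    · intro h
      apply Set.eq_empty_iff_forall_notMem.mpr
      rintro x ⟨hxq, hxP⟩
      rw [hqt] at hxq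
      have hxq' : ψ x = t := hxq
      rcases h with h | h
      · linarith [hlb x hxP]
      · linarith [hub x hxP]
  have hI2 : IsSupportLine (q t) P ↔ (t = M ∨ t = m) := by
    rw [hq t, line_eq hv hn horth, support_iff hv hn horth]
    constructor
    · rintro ⟨⟨y0, hy0P, hy0⟩, h | h⟩
      · left
        have h1 : (⟪xM - S, n⟫ : ℝ) ≤ t := h xM hxM
        have h1' : M ≤ t := h1
        have h2 := hub y0 hy0P
        have hy0' : ψ y0 = t := hy0
        linarith
      · right
        have h1 : t ≤ (⟪xm - S, n⟫ : ℝ) := h xm hxm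
        have h1' : t ≤ m := h1
        have h2 := hlb y0 hy0P
        have hy0' : ψ y0 = t := hy0
        linarith
    · rintro (h | h)
      · subst h
        exact ⟨⟨xM, hxM, rfl⟩, Or.inl hub⟩
      · subst h
        exact ⟨⟨xm, hxm, rfl⟩, Or.inr hlb⟩
  refine ⟨?_, ?_, ?_⟩
  · rw [hI1]
    constructor
    · intro h
      rcases hkey with hk | hk <;> constructor <;> nlinarith
    · rintro ⟨h1, h2⟩
      rcases hkey with hk | hk <;> nlinarith
  · rw [hI2]
    constructor
    · intro h
      rcases hkey with hk | hk
      · left; rw [← hk, h, one_mul]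
      · right; rw [← hk, h, one_mul]
    · rintro (h | h)
      · rcases hkey with hk | hk
        · exact mul_right_cancel₀ (ne_of_gt hM0) (by rw [hk, h, one_mul])
        · exact absurd hk (by nlinarith)
      · rcases hkey with hk | hk
        · exact absurd hk (by nlinarith)
        · exact mul_right_cancel₀ (ne_of_lt hm0) (by rw [hk, h, one_mul])
  · rw [hI3]
    constructor
    · intro h
      rcases hkey with hk | hk
      · right; nlinarith
      · left; nlinarith
    · rintro (h | h) <;> rcases hkey with hk | hk <;> nlinarith
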